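/- Fix 0 ≤ d < 1 and α > −d. Let X₁, X₂, … be i.i.d. samples from a fixed (finite or countably infinite) discrete distribution π, and suppose K_N/N → 0 in probability. Then | E[H|d,α,x_N] − Ĥ_plugin(N) | → 0 in probability as N → ∞. -/

import Mathlib

open MeasureTheory ProbabilityTheory Filter Finset

/-- The digamma function `ψ₀(x) = d/dx log Γ(x)`. -/
noncomputable def digamma (x : ℝ) : ℝ := deriv (fun y => Real.log (Real.Gamma y)) x

variable {Ω : Type*}

/-- `nᵢ(N) = #{j < N : Xⱼ = i}`, the count of symbol `i` among the first `N` samples. -/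
def sampleCount (X : ℕ → Ω → ℕ) (N i : ℕ) (ω : Ω) : ℕ :=
  ((Finset.range N).filter fun j => X j ω = i).card

/-- The set of observed symbols among the first `N` samples. -/
def observedSymbols (X : ℕ → Ω → ℕ) (N : ℕ) (ω : Ω) : Finset ℕ :=
  (Finset.range N).image fun j => X j ω

/-- `K_N`, the number of distinct observed symbols among the first `N` samples. -/
def numDistinct (X : ℕ → Ω → ℕ) (N : ℕ) (ω : Ω) : ℕ :=
  (observedSymbols X N ω).card

/-- The plugin entropy estimator `Ĥ_plugin(N) = −∑ᵢ (nᵢ/N) log(nᵢ/N)`. -/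
noncomputable def pluginEntropy (X : ℕ → Ω → ℕ) (N : ℕ) (ω : Ω) : ℝ :=
  -∑ i ∈ observedSymbols X N ω,
    ((sampleCount X N i ω : ℝ) / N) * Real.log ((sampleCount X N i ω : ℝ) / N)

/-- `E[H|d,α,x_N] = ψ₀(α+N+1) − ((α+K_N d)/(α+N)) ψ₀(1−d)
  − (1/(α+N)) ∑_{i : nᵢ>0} (nᵢ−d) ψ₀(nᵢ−d+1)`. -/
noncomputable def pyPostMeanEntropy (X : ℕ → Ω → ℕ) (d α : ℝ) (N : ℕ) (ω : Ω) : ℝ :=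
  digamma (α + N + 1)
    - ((α + numDistinct X N ω * d) / (α + N)) * digamma (1 - d)
    - (1 / (α + N)) * ∑ i ∈ observedSymbols X N ω,
        ((sampleCount X N i ω : ℝ) - d) * digamma ((sampleCount X N i ω : ℝ) - d + 1)


lemma diffLogGamma {x : ℝ} (hx : 0 < x) :
    DifferentiableAt ℝ (fun y => Real.log (Real.Gamma y)) x := by
  refine DifferentiableAt.log (Real.differentiableAt_Gamma ?_) (Real.Gamma_ne_zero ?_) <;>
    exact fun m => by
    have := Nat.cast_nonneg (α := ℝ) m
    intro h; rw [h] at hx; linarith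

lemma slopeLogGamma {x : ℝ} (hx : 0 < x) :
    slope (fun y => Real.log (Real.Gamma y)) x (x + 1) = Real.log x := by
  rw [slope_def_field, show x + 1 - x = (1:ℝ) by ring, div_one, Real.Gamma_add_one hx.ne',
    Real.log_mul hx.ne' (Real.Gamma_pos_of_pos hx).ne']
  ring

lemma digamma_le_log {x : ℝ} (hx : 0 < x) : digamma x ≤ Real.log x := by
  have h := Real.convexOn_log_Gamma.deriv_le_slope (Set.mem_Ioi.2 hx)
    (Set.mem_Ioi.2 (by linarith : (0:ℝ) < x + 1)) (by linarith) (diffLogGamma hx)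
  rwa [show Real.log ∘ Real.Gamma = fun y => Real.log (Real.Gamma y) from rfl,
    slopeLogGamma hx] at h

lemma log_le_digamma {x : ℝ} (hx : 0 < x) : Real.log x ≤ digamma (x + 1) := by
  have h := Real.convexOn_log_Gamma.slope_le_deriv (Set.mem_Ioi.2 hx)
    (Set.mem_Ioi.2 (by linarith : (0:ℝ) < x + 1)) (by linarith) (diffLogGamma (by linarith))
  rwa [show Real.log ∘ Real.Gamma = fun y => Real.log (Real.Gamma y) from rfl,
    slopeLogGamma hx] at h

lemma term_bound {d : ℝ} (hd0 : 0 ≤ d) (hd1 : d < 1) {n : ℕ} (hn : 1 ≤ n) :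
    |((n:ℝ) - d) * digamma ((n:ℝ) - d + 1) - (n:ℝ) * Real.log n| ≤ 1 + Real.log n := by
  have hn1 : (1:ℝ) ≤ (n:ℝ) := by exact_mod_cast hn
  have ht : 0 < (n:ℝ) - d := by linarith
  have hnpos : (0:ℝ) < n := by linarith
  have hlogn : 0 ≤ Real.log n := Real.log_nonneg hn1
  set t : ℝ := (n:ℝ) - d with htdef
  -- upper bound pieces
  have m1 : t * digamma (t + 1) ≤ t * Real.log (t + 1) :=
    mul_le_mul_of_nonneg_left (digamma_le_log (by linarith)) ht.le
  have m2 : t * Real.log (t + 1) ≤ (n:ℝ) * Real.log ((n:ℝ) + 1) := by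
    have l1 : 0 ≤ Real.log (t + 1) := Real.log_nonneg (by linarith)
    exact mul_le_mul (by linarith) (Real.log_le_log (by linarith) (by linarith)) l1
      (by linarith)
  have m3 : (n:ℝ) * Real.log ((n:ℝ) + 1) - (n:ℝ) * Real.log n ≤ 1 := by
    have h := Real.log_le_sub_one_of_pos (show 0 < ((n:ℝ) + 1) / n by positivity)
    rw [Real.log_div (by linarith) (by linarith)] at h
    have e : ((n:ℝ) + 1) / n - 1 = 1 / n := by field_simp; ring
    rw [e] at h
    have := mul_le_mul_of_nonneg_left h (le_of_lt hnpos)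
    rw [mul_one_div, div_self hnpos.ne'] at this
    linarith [this]
  -- lower bound pieces
  have m4 : t * Real.log t ≤ t * digamma (t + 1) :=
    mul_le_mul_of_nonneg_left (log_le_digamma ht) ht.le
  have m5 : t * (Real.log n - Real.log t) ≤ d := by
    have h := Real.log_le_sub_one_of_pos (show 0 < (n:ℝ) / t by positivity)
    rw [Real.log_div (by linarith) ht.ne'] at h
    have := mul_le_mul_of_nonneg_left h ht.le
    have e : t * ((n:ℝ) / t - 1) = (n:ℝ) - t := by field_simp
    rw [e] at this
    have : t * (Real.log n - Real.log t) ≤ (n:ℝ) - t := by linarith [this]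
    simpa [htdef] using this
  have m6 : t * Real.log n = (n:ℝ) * Real.log n - d * Real.log n := by
    rw [htdef]; ring
  have m7 : d * Real.log n ≤ Real.log n := by nlinarith
  rw [abs_le]
  constructor
  · nlinarith [m4, m5, m6, m7]
  · nlinarith [m1, m2, m3]


lemma one_le_sampleCount (X : ℕ → Ω → ℕ) (N : ℕ) (ω : Ω) {i : ℕ}
    (hi : i ∈ observedSymbols X N ω) : 1 ≤ sampleCount X N i ω := by
  obtain ⟨j, hj, rfl⟩ := Finset.mem_image.1 hi
  exact Finset.card_pos.2 ⟨j, Finset.mem_filter.2 ⟨hj, rfl⟩⟩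

lemma sum_sampleCount (X : ℕ → Ω → ℕ) (N : ℕ) (ω : Ω) :
    ∑ i ∈ observedSymbols X N ω, sampleCount X N i ω = N := by
  have := Finset.card_eq_sum_card_fiberwise
    (f := fun j => X j ω) (s := Finset.range N) (t := observedSymbols X N ω)
    (fun j hj => Finset.mem_image_of_mem _ hj)
  simpa [sampleCount] using this.symm

lemma card_observed_le (X : ℕ → Ω → ℕ) (N : ℕ) (ω : Ω) :
    (observedSymbols X N ω).card ≤ N :=
  le_trans Finset.card_image_le (by simp)

lemma log_le_two_sqrt {x : ℝ} (hx : 1 ≤ x) : Real.log x ≤ 2 * Real.sqrt x := by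
  have h0 : 0 < Real.sqrt x := Real.sqrt_pos.2 (by linarith)
  have h := Real.log_le_sub_one_of_pos h0
  rw [Real.log_sqrt (by linarith)] at h
  linarith [h0.le]

set_option maxHeartbeats 2000000 in
lemma main_bound {Ω : Type*} (X : ℕ → Ω → ℕ) (d α : ℝ)
    (hd0 : 0 ≤ d) (hd1 : d < 1) (hα : -d < α) :
    ∃ C : ℝ, 0 < C ∧ ∀ N : ℕ, 2 ≤ N → ∀ ω : Ω,
      |pyPostMeanEntropy X d α N ω - pluginEntropy X N ω| ≤
        C * (1 + Real.log N) / N + C * Real.sqrt ((numDistinct X N ω : ℝ) / N) := by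
  set ψc := |digamma (1 - d)| with hψc
  set A := |α| with hA
  have hψc0 : 0 ≤ ψc := abs_nonneg _
  have hA0 : 0 ≤ A := abs_nonneg _
  refine ⟨2*(A+1)*(ψc+1) + 6, by positivity, ?_⟩
  intro N hN2 ω
  set s := observedSymbols X N ω with hs
  set K : ℝ := ((observedSymbols X N ω).card : ℝ) with hKdef
  set S : ℝ := ∑ i ∈ s, (sampleCount X N i ω : ℝ) * Real.log (sampleCount X N i ω) with hS
  set S' : ℝ := ∑ i ∈ s, ((sampleCount X N i ω : ℝ) - d)
      * digamma ((sampleCount X N i ω : ℝ) - d + 1) with hS'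
  have hα1 : (-1:ℝ) < α := by linarith
  have hNR : (2:ℝ) ≤ (N:ℝ) := by exact_mod_cast hN2
  have hNpos : (0:ℝ) < N := by linarith
  have ha : 0 < α + (N:ℝ) := by linarith
  have haN : (N:ℝ) ≤ 2*(α + N) := by linarith
  have hK0 : 0 ≤ K := Nat.cast_nonneg _
  have hKN : K ≤ (N:ℝ) := by rw [hKdef]; exact_mod_cast card_observed_le X N ω
  have hlogN : 0 ≤ Real.log N := Real.log_nonneg (by linarith)
  have hcnt : ∀ i ∈ s, 1 ≤ sampleCount X N i ω := fun i hi => one_le_sampleCount X N ω hi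
  have hcntR : ∀ i ∈ s, (1:ℝ) ≤ (sampleCount X N i ω : ℝ) := fun i hi => by
    exact_mod_cast hcnt i hi
  have hsumR : ∑ i ∈ s, (sampleCount X N i ω : ℝ) = N := by
    exact_mod_cast sum_sampleCount X N ω
  have hcle : ∀ i ∈ s, (sampleCount X N i ω : ℝ) ≤ N := by
    intro i hi
    rw [← hsumR]
    exact Finset.single_le_sum (f := fun j => (sampleCount X N j ω : ℝ))
      (fun j _ => by positivity) hi
  -- plugin rewriting
  have hplug : pluginEntropy X N ω = Real.log N - S / N := by
    have h1 : ∀ i ∈ s, ((sampleCount X N i ω : ℝ)/N) * Real.log ((sampleCount X N i ω : ℝ)/N)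
        = ((sampleCount X N i ω : ℝ) * Real.log (sampleCount X N i ω)
            - (sampleCount X N i ω : ℝ) * Real.log N)/N := by
      intro i hi
      have hpos : (0:ℝ) < (sampleCount X N i ω : ℝ) := lt_of_lt_of_le one_pos (hcntR i hi)
      rw [Real.log_div hpos.ne' hNpos.ne']; ring
    simp only [pluginEntropy, ← hs]
    rw [Finset.sum_congr rfl h1, ← Finset.sum_div, Finset.sum_sub_distrib, ← Finset.sum_mul,
      hsumR, ← hS]
    field_simp
    ring
  -- S bounds
  have hS0 : 0 ≤ S := Finset.sum_nonneg fun i hi =>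
    mul_nonneg (by positivity) (Real.log_nonneg (hcntR i hi))
  have hS1 : S ≤ (N:ℝ) * Real.log N := by
    calc S ≤ ∑ i ∈ s, (sampleCount X N i ω : ℝ) * Real.log N := by
          refine Finset.sum_le_sum fun i hi => ?_
          exact mul_le_mul_of_nonneg_left
            (Real.log_le_log (lt_of_lt_of_le one_pos (hcntR i hi)) (hcle i hi)) (by positivity)
      _ = (N:ℝ) * Real.log N := by rw [← Finset.sum_mul, hsumR]
  -- error sum bound
  have hE : |S' - S| ≤ K + 2 * Real.sqrt (K * N) := by
    have h1 : |S' - S| ≤ ∑ i ∈ s, (1 + Real.log (sampleCount X N i ω)) := by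
      rw [hS', hS, ← Finset.sum_sub_distrib]
      refine (Finset.abs_sum_le_sum_abs _ _).trans (Finset.sum_le_sum fun i hi => ?_)
      exact term_bound hd0 hd1 (hcnt i hi)
    have h2 : ∑ i ∈ s, (1 + Real.log (sampleCount X N i ω))
        = K + ∑ i ∈ s, Real.log (sampleCount X N i ω) := by
      rw [Finset.sum_add_distrib, Finset.sum_const, nsmul_eq_mul, mul_one, hKdef, hs]
    have h3 : ∑ i ∈ s, Real.log (sampleCount X N i ω)
        ≤ 2 * ∑ i ∈ s, Real.sqrt (sampleCount X N i ω) := by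
      rw [Finset.mul_sum]
      exact Finset.sum_le_sum fun i hi => log_le_two_sqrt (hcntR i hi)
    have h4 : ∑ i ∈ s, Real.sqrt (sampleCount X N i ω) ≤ Real.sqrt (K * N) := by
      rw [Real.le_sqrt (Finset.sum_nonneg fun i _ => Real.sqrt_nonneg _)
        (mul_nonneg hK0 hNpos.le)]
      have h5 := Finset.sum_sq_le_sum_mul_sum_of_sq_eq_mul s
        (r := fun i => Real.sqrt ((sampleCount X N i ω : ℝ)))
        (f := fun _ => (1:ℝ)) (g := fun i => (sampleCount X N i ω : ℝ))
        (fun i _ => zero_le_one) (fun i _ => by positivity)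
        (fun i hi => by rw [Real.sq_sqrt (by positivity), one_mul])
      simp only [hsumR] at h5
      simpa [hKdef, hs] using h5
    calc |S' - S| ≤ K + ∑ i ∈ s, Real.log (sampleCount X N i ω) := by rw [← h2]; exact h1
      _ ≤ K + 2 * Real.sqrt (K * N) := by linarith
  -- digamma at α+N+1
  have hT1 : |digamma (α + N + 1) - Real.log N| ≤ 2*(A+1)/N := by
    have hup : digamma (α + (N:ℝ) + 1) ≤ Real.log (α + N + 1) := digamma_le_log (by linarith)
    have hlo : Real.log (α + N) ≤ digamma (α + (N:ℝ) + 1) := by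
      have h := log_le_digamma ha
      convert h using 2 <;> ring
    have h1 : Real.log (α+(N:ℝ)+1) - Real.log N ≤ 2*(A+1)/N := by
      have h := Real.log_le_sub_one_of_pos (show 0 < (α+(N:ℝ)+1)/N by positivity)
      rw [Real.log_div (by positivity) hNpos.ne'] at h
      have e : (α+(N:ℝ)+1)/N - 1 = (α+1)/N := by field_simp; ring
      rw [e] at h
      have hα' : α ≤ A := le_abs_self α
      have h2 : (α+1)/(N:ℝ) ≤ 2*(A+1)/N := by gcongr <;> linarith
      linarith
    have h2 : Real.log (N:ℝ) - Real.log (α+N) ≤ 2*A/N := by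
      have h := Real.log_le_sub_one_of_pos (show 0 < (N:ℝ)/(α+N) by positivity)
      rw [Real.log_div hNpos.ne' ha.ne'] at h
      have e : (N:ℝ)/(α+N) - 1 ≤ 2*A/N := by
        rw [div_sub' ha.ne', div_le_div_iff₀ ha hNpos]
        have hα' : -α ≤ A := neg_le_abs α
        nlinarith
      linarith
    have h3 : 2*A/(N:ℝ) ≤ 2*(A+1)/N := by gcongr <;> linarith
    rw [abs_le]
    constructor
    · linarith
    · linarith
  -- constant term
  have hT2 : |(α + K*d)/(α+(N:ℝ)) * digamma (1-d)| ≤ 2*(A+K)*ψc/N := by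
    rw [abs_mul, abs_div, abs_of_pos ha, ← hψc]
    have h1 : |α + K*d| ≤ A + K := by
      calc |α + K*d| ≤ |α| + |K*d| := abs_add_le _ _
        _ = A + K*d := by rw [abs_of_nonneg (mul_nonneg hK0 hd0), hA]
        _ ≤ A + K := by nlinarith
    have h2 : |α + K*d|/(α+(N:ℝ)) * ψc ≤ (A+K)/(α+(N:ℝ)) * ψc := by gcongr
    have h3 : (A+K)/(α+(N:ℝ)) * ψc ≤ (2*(A+K)/N) * ψc := by
      refine mul_le_mul_of_nonneg_right ?_ hψc0
      rw [div_le_div_iff₀ ha hNpos]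
      nlinarith [mul_le_mul_of_nonneg_left haN (add_nonneg hA0 hK0)]
    calc |α + K*d|/(α+(N:ℝ)) * ψc ≤ (2*(A+K)/(N:ℝ)) * ψc := h2.trans h3
      _ = 2*(A+K)*ψc/N := by ring
  -- sum term
  have hT3 : |S'/(α+(N:ℝ)) - S/N| ≤ 2*(K + 2*Real.sqrt (K*N))/N + 2*A*Real.log N/N := by
    have hid : S'/(α+(N:ℝ)) - S/N = (S'-S)/(α+(N:ℝ)) + S*(-α)/((α+(N:ℝ))*N) := by
      field_simp; ring
    rw [hid]
    have h1 : |(S'-S)/(α+(N:ℝ))| ≤ 2*(K + 2*Real.sqrt (K*(N:ℝ)))/N := by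
      rw [abs_div, abs_of_pos ha, div_le_div_iff₀ ha hNpos]
      have hE0 : 0 ≤ K + 2*Real.sqrt (K*(N:ℝ)) := by positivity
      nlinarith [mul_le_mul_of_nonneg_right hE hNpos.le,
        mul_le_mul_of_nonneg_left haN hE0]
    have h2 : |S*(-α)/((α+(N:ℝ))*N)| ≤ 2*A*Real.log N/N := by
      rw [abs_div, abs_of_pos (mul_pos ha hNpos), div_le_div_iff₀ (mul_pos ha hNpos) hNpos]
      have e : |S*(-α)| = S * A := by rw [abs_mul, abs_of_nonneg hS0, abs_neg, hA]
      rw [e]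
      nlinarith [mul_le_mul_of_nonneg_right (mul_le_mul_of_nonneg_right hS1 hA0) hNpos.le,
        mul_le_mul_of_nonneg_left haN (by positivity : (0:ℝ) ≤ A*Real.log N*N)]
    calc |(S'-S)/(α+(N:ℝ)) + S*(-α)/((α+(N:ℝ))*N)|
        ≤ |(S'-S)/(α+(N:ℝ))| + |S*(-α)/((α+(N:ℝ))*N)| := abs_add_le _ _
      _ ≤ 2*(K + 2*Real.sqrt (K*N))/N + 2*A*Real.log N/N := by linarith
  -- representation
  have hrepr : pyPostMeanEntropy X d α N ω - pluginEntropy X N ω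
      = (digamma (α+(N:ℝ)+1) - Real.log N) - ((α + K*d)/(α+(N:ℝ))) * digamma (1-d)
        - (S'/(α+(N:ℝ)) - S/N) := by
    simp only [pyPostMeanEntropy, numDistinct]
    rw [hplug, ← hKdef, ← hs, ← hS']
    ring
  have habs : |pyPostMeanEntropy X d α N ω - pluginEntropy X N ω|
      ≤ |digamma (α+(N:ℝ)+1) - Real.log N| + |(α + K*d)/(α+(N:ℝ)) * digamma (1-d)|
        + |S'/(α+(N:ℝ)) - S/N| := by
    rw [hrepr]
    calc |digamma (α+(N:ℝ)+1) - Real.log N - (α + K*d)/(α+(N:ℝ)) * digamma (1-d)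
          - (S'/(α+(N:ℝ)) - S/N)|
        ≤ |digamma (α+(N:ℝ)+1) - Real.log N - (α + K*d)/(α+(N:ℝ)) * digamma (1-d)|
          + |S'/(α+(N:ℝ)) - S/N| := abs_sub _ _
      _ ≤ _ := by
          have := abs_sub (digamma (α+(N:ℝ)+1) - Real.log N)
            ((α + K*d)/(α+(N:ℝ)) * digamma (1-d))
          linarith
  -- convert sqrt(K*N)/N to sqrt(K/N)
  have hnum : ((numDistinct X N ω : ℝ)) = K := rfl
  rw [hnum]
  set r := Real.sqrt (K/(N:ℝ)) with hr
  have hr0 : 0 ≤ r := Real.sqrt_nonneg _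
  have hsq1 : Real.sqrt (K*(N:ℝ)) = r * N := by
    rw [hr, show K*(N:ℝ) = (K/(N:ℝ)) * (N:ℝ)^2 by field_simp,
      Real.sqrt_mul (by positivity), Real.sqrt_sq hNpos.le]
  have hsq2 : K/(N:ℝ) ≤ r := by
    rw [hr, Real.le_sqrt (by positivity) (by positivity)]
    have h1 : K/(N:ℝ) ≤ 1 := by rw [div_le_one hNpos]; exact hKN
    nlinarith [div_nonneg hK0 hNpos.le]
  have e2 : 2*(K + 2*Real.sqrt (K*(N:ℝ)))/(N:ℝ) = 2*(K/(N:ℝ)) + 4*r := by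
    rw [hsq1]; field_simp; ring
  have e3 : 2*(A+K)*ψc/(N:ℝ) = 2*A*ψc/(N:ℝ) + 2*ψc*(K/(N:ℝ)) := by ring
  have c1 : 2*(A+1)/(N:ℝ) + 2*A*ψc/(N:ℝ) ≤ (2*(A+1)*(ψc+1)+6)/(N:ℝ) := by
    rw [← add_div]
    gcongr ?_ / _
    nlinarith
  have c2 : 2*A*Real.log (N:ℝ)/(N:ℝ) ≤ (2*(A+1)*(ψc+1)+6)*Real.log (N:ℝ)/(N:ℝ) := by
    gcongr
    nlinarith
  have c3 : 2*ψc*(K/(N:ℝ)) + 2*(K/(N:ℝ)) + 4*r ≤ (2*(A+1)*(ψc+1)+6)*r := by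
    have h1 : (2*ψc+2)*(K/(N:ℝ)) ≤ (2*ψc+2)*r :=
      mul_le_mul_of_nonneg_left hsq2 (by positivity)
    nlinarith [mul_nonneg (mul_nonneg hA0 hψc0) hr0, mul_nonneg hA0 hr0]
  have efin : (2*(A+1)*(ψc+1)+6) * (1 + Real.log (N:ℝ))/(N:ℝ)
      = (2*(A+1)*(ψc+1)+6)/(N:ℝ) + (2*(A+1)*(ψc+1)+6)*Real.log (N:ℝ)/(N:ℝ) := by ring
  rw [efin]
  rw [e2] at hT3
  linarith [habs, hT1, hT2, hT3, c1, c2, c3, e3]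

/-- **Consistency of the fixed-parameter Pitman–Yor posterior mean.** Fix `0 ≤ d < 1` and
`α > −d`. If `X₁, X₂, …` are i.i.d. samples from a fixed discrete distribution `p` on `ℕ`
and `K_N/N → 0` in probability, then `|E[H|d,α,x_N] − Ĥ_plugin(N)| → 0` in probability. -/
theorem pyPostMeanEntropy_consistent [MeasurableSpace Ω]
    (μ : Measure Ω) [IsProbabilityMeasure μ]
    (X : ℕ → Ω → ℕ) (hX : ∀ j, Measurable (X j))
    (hindep : iIndepFun X μ)
    (p : ℕ → ℝ) (hp : ∀ i, 0 ≤ p i) (hp1 : ∑' i, p i = 1)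
    (hlaw : ∀ j i, μ {ω | X j ω = i} = ENNReal.ofReal (p i))
    (d α : ℝ) (hd0 : 0 ≤ d) (hd1 : d < 1) (hα : -d < α)
    (hK : ∀ ε > (0 : ℝ),
      Tendsto (fun N => μ {ω | ε ≤ (numDistinct X N ω : ℝ) / N}) atTop (nhds 0)) :
    ∀ ε > (0 : ℝ),
      Tendsto (fun N =>
          μ {ω | ε ≤ |pyPostMeanEntropy X d α N ω - pluginEntropy X N ω|})
        atTop (nhds 0) := by
  intro ε hε
  obtain ⟨C, hC, hbound⟩ := main_bound X d α hd0 hd1 hα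
  have hε' : (0:ℝ) < (ε/(2*C))^2 := by positivity
  have hK' := hK _ hε'
  set M : ℕ := max 2 (Nat.ceil ((6*C/ε)^2) + 1) with hM
  refine tendsto_of_tendsto_of_tendsto_of_le_of_le' tendsto_const_nhds hK' ?_ ?_
  · filter_upwards with N using zero_le
  · filter_upwards [eventually_ge_atTop M] with N hN
    apply measure_mono
    intro ω hω
    simp only [Set.mem_setOf_eq] at hω ⊢
    have hN2 : 2 ≤ N := le_trans (le_max_left _ _) hN
    have hNR : (2:ℝ) ≤ (N:ℝ) := by exact_mod_cast hN2
    have hNpos : (0:ℝ) < N := by linarith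
    have hb := hbound N hN2 ω
    have hsN : (6*C/ε : ℝ) ≤ Real.sqrt N := by
      have h0 : Real.sqrt ((6*C/ε)^2) ≤ Real.sqrt N := by
        apply Real.sqrt_le_sqrt
        have h1 : ((6*C/ε)^2 : ℝ) ≤ ((Nat.ceil ((6*C/ε)^2) + 1 : ℕ) : ℝ) := by
          push_cast
          linarith [Nat.le_ceil ((6*C/ε)^2 : ℝ)]
        have h2 : ((Nat.ceil ((6*C/ε)^2) + 1 : ℕ) : ℝ) ≤ (N : ℝ) := by
          exact_mod_cast le_trans (le_max_right 2 _) hN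
        linarith
      rwa [Real.sqrt_sq (by positivity)] at h0
    set t := Real.sqrt (N:ℝ) with htdef
    have ht0 : 0 < t := Real.sqrt_pos.2 hNpos
    have ht2 : t*t = (N:ℝ) := Real.mul_self_sqrt hNpos.le
    have ht1 : 1 ≤ t := by nlinarith
    have hlog : Real.log N ≤ 2*t := log_le_two_sqrt (by linarith)
    have hAN : C*(1+Real.log N)/N ≤ ε/2 := by
      rw [div_le_iff₀ hNpos]
      have h6 : 6*C ≤ ε*t := by
        rw [div_le_iff₀ hε] at hsN; linarith
      nlinarith [mul_le_mul_of_nonneg_left hlog hC.le,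
        mul_le_mul_of_nonneg_right h6 ht0.le,
        mul_le_mul_of_nonneg_left ht1 hC.le, Real.log_nonneg (by linarith : (1:ℝ) ≤ (N:ℝ))]
    have h7 : ε/2 ≤ C * Real.sqrt ((numDistinct X N ω : ℝ)/N) := by linarith
    have h8 : ε/(2*C) ≤ Real.sqrt ((numDistinct X N ω : ℝ)/N) := by
      rw [div_le_iff₀ (by positivity : (0:ℝ) < 2*C)]
      nlinarith [h7]
    rwa [Real.le_sqrt (by positivity) (by positivity)] at h8
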